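/- Let (X,d) be a finite metric space, h a chaining functional of log-concave type, and ν a probability measure on X. Then there exists a nonempty set S ⊆ {x ∈ X : ν(x) > 0} such that Σ_{x∈X} ν(x)·∫₀^∞ h(ν(B(x,r))) dr ≤ min_{x∈S} ∫₀^∞ h(ν_S(B(x,r))) dr + diam(X), where ν_S is the conditional probability measure ν_S(A) := ν(A ∩ S)/ν(S) for A ⊆ X. -/

import Mathlib

open MeasureTheory

noncomputable section

/-- `f` is log-concave on `[0,∞)`. -/
def IsLogConcaveOn (f : ℝ → ℝ) : Prop :=
  ∀ x ∈ Set.Ici (0:ℝ), ∀ y ∈ Set.Ici (0:ℝ), ∀ t ∈ Set.Icc (0:ℝ) 1,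
    f x ^ t * f y ^ (1 - t) ≤ f (t * x + (1 - t) * y)

/-- `f` is a continuous, non-increasing, log-concave probability density on `[0,∞)`
normalized so that `f 0 = 1`. -/
structure IsChainingDensity (f : ℝ → ℝ) : Prop where
  nonneg : ∀ t : ℝ, 0 ≤ t → 0 ≤ f t
  continuousOn : ContinuousOn f (Set.Ici 0)
  antitoneOn : AntitoneOn f (Set.Ici 0)
  logConcave : IsLogConcaveOn f
  total : (∫ t in Set.Ioi (0:ℝ), f t) = 1
  normalized : f 0 = 1

/-- The complementary cumulative distribution function `F(s) = ∫_s^∞ f(t) dt`. -/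
def ccdf (f : ℝ → ℝ) (s : ℝ) : ℝ := ∫ t in Set.Ioi s, f t

/-- The chaining functional `h(p) = F⁻¹(p)`, defined on `(0,1]` as the least
`s ≥ 0` with `F(s) ≤ p`. -/
def chainFn (f : ℝ → ℝ) (p : ℝ) : ℝ := sInf {s : ℝ | 0 ≤ s ∧ ccdf f s ≤ p}

open scoped ENNReal

/-- The extended (`[0,∞]`-valued) chaining functional: `h(p)` is the least `s ≥ 0`
with `F(s) ≤ p`, and `+∞` when no such `s` exists (in particular
`h(0) = lim_{p→0⁺} h(p) ∈ (0,∞]`). -/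
def chainFnE (f : ℝ → ℝ) (p : ℝ) : ℝ≥0∞ :=
  sInf {t : ℝ≥0∞ | ∃ s : ℝ, 0 ≤ s ∧ ccdf f s ≤ p ∧ t = ENNReal.ofReal s}

namespace Aux5
open Set
variable {f : ℝ → ℝ}

lemma intOn (hf : IsChainingDensity f) : IntegrableOn f (Set.Ioi 0) := by
  by_contra h
  have := hf.total
  rw [integral_undef h] at this
  norm_num at this

lemma intOn' (hf : IsChainingDensity f) {s : ℝ} (hs : 0 ≤ s) :
    IntegrableOn f (Set.Ioi s) := (intOn hf).mono_set (Ioi_subset_Ioi hs)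

lemma ccdf_nonneg (hf : IsChainingDensity f) {s : ℝ} (hs : 0 ≤ s) : 0 ≤ ccdf f s := by
  refine setIntegral_nonneg measurableSet_Ioi fun t ht => hf.nonneg t (le_trans hs (le_of_lt ht))

lemma ccdf_zero (hf : IsChainingDensity f) : ccdf f 0 = 1 := hf.total

lemma ccdf_anti (hf : IsChainingDensity f) {s t : ℝ} (hs : 0 ≤ s) (hst : s ≤ t) :
    ccdf f t ≤ ccdf f s := by
  refine setIntegral_mono_set (intOn' hf hs) ?_ (HasSubset.Subset.eventuallyLE (Ioi_subset_Ioi hst))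
  filter_upwards [ae_restrict_mem measurableSet_Ioi] with u hu
  exact hf.nonneg u (le_trans hs (le_of_lt hu))

lemma ccdf_le_one (hf : IsChainingDensity f) {s : ℝ} (hs : 0 ≤ s) : ccdf f s ≤ 1 := by
  rw [← ccdf_zero hf]; exact ccdf_anti hf le_rfl hs

lemma ccdf_split (hf : IsChainingDensity f) {s t : ℝ} (hs : 0 ≤ s) (hst : s ≤ t) :
    ccdf f s = (∫ u in Set.Ioc s t, f u) + ccdf f t := by
  rw [ccdf, ccdf, ← setIntegral_union (Ioc_disjoint_Ioi le_rfl) measurableSet_Ioi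
    ((intOn' hf hs).mono_set Ioc_subset_Ioi_self) (intOn' hf (le_trans hs hst)),
    Ioc_union_Ioi_eq_Ioi hst]

lemma f_le_one (hf : IsChainingDensity f) {s : ℝ} (hs : 0 ≤ s) : f s ≤ 1 := by
  rw [← hf.normalized]; exact hf.antitoneOn self_mem_Ici hs hs

lemma ccdf_sub_le (hf : IsChainingDensity f) {s t : ℝ} (hs : 0 ≤ s) (hst : s ≤ t) :
    ccdf f s - ccdf f t ≤ t - s := by
  rw [ccdf_split hf hs hst]
  have h1 : (∫ u in Set.Ioc s t, f u) ≤ ∫ u in Set.Ioc s t, (1:ℝ) := by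
    refine setIntegral_mono_on ((intOn' hf hs).mono_set Ioc_subset_Ioi_self)
      (integrableOn_const measure_Ioc_lt_top.ne) measurableSet_Ioc ?_
    exact fun u hu => f_le_one hf (le_trans hs hu.1.le)
  simp [Real.volume_Ioc, ENNReal.toReal_ofReal (by linarith : (0:ℝ) ≤ t - s)] at h1
  rw [add_sub_cancel_right]
  rcases h1 with h1 | h1 <;> linarith

lemma ccdf_lipschitz (hf : IsChainingDensity f) :
    LipschitzOnWith 1 (ccdf f) (Set.Ici 0) := by
  rw [lipschitzOnWith_iff_dist_le_mul]
  intro s hs t ht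
  rw [NNReal.coe_one, one_mul, Real.dist_eq, Real.dist_eq]
  rcases le_total t s with h | h
  · have h1 := ccdf_anti hf ht h
    have h2 := ccdf_sub_le hf ht h
    rw [abs_of_nonpos (by linarith), abs_of_nonneg (by linarith)]
    linarith
  · have h1 := ccdf_anti hf hs h
    have h2 := ccdf_sub_le hf hs h
    rw [abs_of_nonneg (by linarith), abs_of_nonpos (by linarith)]
    linarith

lemma ccdf_continuousOn (hf : IsChainingDensity f) : ContinuousOn (ccdf f) (Set.Ici 0) :=
  (ccdf_lipschitz hf).continuousOn

lemma pair_ineq (hf : IsChainingDensity f)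
    {x x' y' y : ℝ} (hx : 0 ≤ x) (h1 : x ≤ x') (h2 : x' ≤ y') (h3 : y' ≤ y)
    (hsum : x + y = x' + y') : f x * f y ≤ f x' * f y' := by
  have hnn := hf.nonneg
  rcases eq_or_lt_of_le (le_trans h1 (le_trans h2 h3)) with heq | hlt
  · have hx' : x = x' := le_antisymm h1 (by linarith)
    have hy' : y = y' := by linarith
    rw [← hx', ← hy']
  rcases le_or_gt (f x) 0 with hfx | hfx
  · have : f x = 0 := le_antisymm hfx (hnn x hx)
    rw [this, zero_mul]
    exact mul_nonneg (hnn x' (by linarith)) (hnn y' (by linarith))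
  rcases le_or_gt (f y) 0 with hfy | hfy
  · have : f y = 0 := le_antisymm hfy (hnn y (by linarith))
    rw [this, mul_zero]
    exact mul_nonneg (hnn x' (by linarith)) (hnn y' (by linarith))
  set θ : ℝ := (y - x') / (y - x) with hθ
  have hyx : 0 < y - x := by linarith
  have hθ0 : 0 ≤ θ := div_nonneg (by linarith) hyx.le
  have hθ1 : θ ≤ 1 := (div_le_one hyx).2 (by linarith)
  have e1 : θ * x + (1 - θ) * y = x' := by rw [hθ]; field_simp; ring
  have e2 : (1 - θ) * x + (1 - (1 - θ)) * y = y' := by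
    field_simp [hθ]; ring_nf; nlinarith [hsum]
  have i1 := hf.logConcave x hx y (by simp; linarith) θ ⟨hθ0, hθ1⟩
  have i2 := hf.logConcave x hx y (by simp; linarith) (1 - θ) ⟨by linarith, by linarith⟩
  rw [e1] at i1
  rw [e2] at i2
  have key : f x ^ θ * f y ^ (1 - θ) * (f x ^ (1 - θ) * f y ^ (1 - (1 - θ))) = f x * f y := by
    rw [show f x ^ θ * f y ^ (1-θ) * (f x ^ (1-θ) * f y ^ (1-(1-θ)))
        = (f x ^ θ * f x ^ (1-θ)) * (f y ^ (1-θ) * f y ^ (1-(1-θ))) by ring,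
      ← Real.rpow_add hfx, ← Real.rpow_add hfy]
    norm_num
  calc f x * f y = f x ^ θ * f y ^ (1 - θ) * (f x ^ (1 - θ) * f y ^ (1 - (1 - θ))) := key.symm
    _ ≤ f x' * f y' :=
        mul_le_mul i1 i2 (mul_nonneg (Real.rpow_nonneg hfx.le _) (Real.rpow_nonneg hfy.le _))
          (hnn x' (by linarith))

lemma hazard (hf : IsChainingDensity f) {s t : ℝ} (hs : 0 ≤ s) (hst : s ≤ t) :
    f s * ccdf f t ≤ f t * ccdf f s := by
  set c := t - s with hc
  have ht0 : 0 ≤ t := le_trans hs hst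
  have hind : ∀ u : ℝ, (Ioi t).indicator (fun u => f (u - c)) u = (Ioi s).indicator f (u - c) := by
    intro u
    by_cases hu : u ∈ Ioi t
    · rw [indicator_of_mem hu, indicator_of_mem (by simp only [mem_Ioi] at hu ⊢; linarith)]
    · rw [indicator_of_notMem hu, indicator_of_notMem
        (by simp only [mem_Ioi] at hu ⊢; linarith)]
  have hint2 : IntegrableOn (fun u => f (u - c)) (Set.Ioi t) := by
    have h2 := (((integrable_indicator_iff measurableSet_Ioi).2 (intOn' hf hs)).comp_sub_right
      (μ := volume) c)
    have h3 : Integrable ((Ioi t).indicator fun u => f (u - c)) volume :=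
      h2.congr (Filter.Eventually.of_forall fun u => (hind u).symm)
    exact (integrable_indicator_iff measurableSet_Ioi).1 h3
  have heq : (∫ u in Set.Ioi t, f (u - c)) = ccdf f s := by
    rw [← integral_indicator measurableSet_Ioi]
    calc (∫ u, (Ioi t).indicator (fun u => f (u - c)) u)
        = ∫ u, (Ioi s).indicator f (u - c) := by simp_rw [hind]
      _ = ∫ u, (Ioi s).indicator f u := by
          exact integral_sub_right_eq_self (fun u => (Ioi s).indicator f u) c
      _ = ccdf f s := integral_indicator measurableSet_Ioi
  calc f s * ccdf f t = ∫ u in Set.Ioi t, f s * f u := (integral_const_mul _ _).symm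
    _ ≤ ∫ u in Set.Ioi t, f t * f (u - c) := by
        refine setIntegral_mono_on ((intOn' hf ht0).const_mul (f s))
          (hint2.const_mul (f t)) measurableSet_Ioi ?_
        intro u hu
        rw [mem_Ioi] at hu
        rcases le_total (u - c) t with h | h
        · have := pair_ineq hf hs (show s ≤ u - c by simp [hc]; linarith) h hu.le
            (by simp [hc]; ring)
          linarith [this]
        · exact pair_ineq hf hs hst h (by simp [hc]; linarith) (by simp [hc]; ring)
    _ = f t * ccdf f s := by rw [integral_const_mul, heq]

lemma ccdf_eq_one_sub (hf : IsChainingDensity f) {s : ℝ} (hs : 0 ≤ s) :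
    ccdf f s = 1 - ∫ u in (0:ℝ)..s, f u := by
  have h := ccdf_split hf le_rfl hs
  rw [ccdf_zero hf] at h
  rw [intervalIntegral.integral_of_le hs]
  linarith

lemma hasDerivAt_ccdf (hf : IsChainingDensity f) {s : ℝ} (hs : 0 < s) :
    HasDerivAt (ccdf f) (-f s) s := by
  have hP : HasDerivAt (fun u => ∫ t in (0:ℝ)..u, f t) (f s) s := by
    refine intervalIntegral.integral_hasDerivAt_right ?_ ?_ ?_
    · rw [intervalIntegrable_iff_integrableOn_Ioc_of_le hs.le]
      exact (intOn hf).mono_set Ioc_subset_Ioi_self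
    · exact ⟨Set.Ioi 0, Ioi_mem_nhds hs,
        ((hf.continuousOn.mono Ioi_subset_Ici_self).aestronglyMeasurable measurableSet_Ioi)⟩
    · exact hf.continuousOn.continuousAt (Filter.mem_of_superset (Ioi_mem_nhds hs)
        Ioi_subset_Ici_self)
  have h2 : HasDerivAt (fun u => 1 - ∫ t in (0:ℝ)..u, f t) (-f s) s := hP.const_sub 1
  refine h2.congr_of_eventuallyEq ?_
  filter_upwards [Ioi_mem_nhds hs] with u hu
  exact ccdf_eq_one_sub hf (le_of_lt hu)

lemma ccdf_le_f (hf : IsChainingDensity f) {s : ℝ} (hs : 0 ≤ s) : ccdf f s ≤ f s := by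
  have h := hazard hf le_rfl hs
  rw [hf.normalized, ccdf_zero hf, one_mul, mul_one] at h
  exact h

lemma ccdf_le_exp (hf : IsChainingDensity f) {s : ℝ} (hs : 0 ≤ s) :
    ccdf f s ≤ Real.exp (-s) := by
  have hanti : AntitoneOn (fun u => Real.exp u * ccdf f u) (Set.Ici 0) := by
    refine antitoneOn_of_deriv_nonpos (convex_Ici 0)
      (Real.continuous_exp.continuousOn.mul (ccdf_continuousOn hf)) ?_ ?_
    · intro u hu
      rw [interior_Ici] at hu
      exact ((Real.hasDerivAt_exp u).mul (hasDerivAt_ccdf hf hu)).differentiableAt.differentiableWithinAt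
    · intro u hu
      rw [interior_Ici] at hu
      rw [HasDerivAt.deriv (f := fun u => Real.exp u * ccdf f u) ((Real.hasDerivAt_exp u).mul (hasDerivAt_ccdf hf hu))]
      have h1 := ccdf_le_f hf hu.le
      have h2 := Real.exp_pos u
      nlinarith
  have h := hanti (self_mem_Ici) hs hs
  simp only [Real.exp_zero, one_mul, ccdf_zero hf, mul_one] at h
  rw [Real.exp_neg, ← one_div, le_div_iff₀ (Real.exp_pos s)]
  nlinarith [h]

lemma ccdf_submul (hf : IsChainingDensity f) {s t : ℝ} (hs : 0 ≤ s) (ht : 0 ≤ t) :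
    ccdf f (s + t) ≤ ccdf f s * ccdf f t := by
  rcases eq_or_lt_of_le hs with rfl | hs'
  · simp [ccdf_zero hf]
  by_cases hFs : ccdf f s ≤ 0
  · have h0 : ccdf f s = 0 := le_antisymm hFs (ccdf_nonneg hf hs)
    have h1 : ccdf f (s + t) ≤ 0 := h0 ▸ ccdf_anti hf hs (by linarith)
    rw [h0, zero_mul]
    exact h1
  push_neg at hFs
  have hpos : ∀ u ∈ Set.Icc (0:ℝ) s, 0 < ccdf f u :=
    fun u hu => lt_of_lt_of_le hFs (ccdf_anti hf hu.1 hu.2)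
  have hanti : AntitoneOn (fun u => ccdf f (u + t) / ccdf f u) (Set.Icc 0 s) := by
    refine antitoneOn_of_deriv_nonpos (convex_Icc 0 s) ?_ ?_ ?_
    · refine ContinuousOn.div ?_ ((ccdf_continuousOn hf).mono Icc_subset_Ici_self)
        (fun u hu => (hpos u hu).ne')
      refine (ccdf_continuousOn hf).comp (Continuous.continuousOn (by continuity)) ?_
      intro u hu
      exact add_nonneg hu.1 ht
    · intro u hu
      rw [interior_Icc] at hu
      have hA : HasDerivAt (fun u => ccdf f (u + t)) (-f (u + t)) u := by
        have := (hasDerivAt_ccdf hf (by linarith [hu.1] : 0 < u + t)).comp u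
          ((hasDerivAt_id u).add_const t)
        simpa [Function.comp_def] using this
      exact (hA.div (hasDerivAt_ccdf hf hu.1) (hpos u ⟨hu.1.le, hu.2.le⟩).ne').differentiableAt.differentiableWithinAt
    · intro u hu
      rw [interior_Icc] at hu
      have hA : HasDerivAt (fun u => ccdf f (u + t)) (-f (u + t)) u := by
        have := (hasDerivAt_ccdf hf (by linarith [hu.1] : 0 < u + t)).comp u
          ((hasDerivAt_id u).add_const t)
        simpa [Function.comp_def] using this
      rw [HasDerivAt.deriv (f := fun u => ccdf f (u + t) / ccdf f u) (hA.div (hasDerivAt_ccdf hf hu.1) (hpos u ⟨hu.1.le, hu.2.le⟩).ne')]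
      have hz := hazard hf hu.1.le (by linarith [ht] : u ≤ u + t)
      have hsq : (0:ℝ) ≤ ccdf f u ^ 2 := sq_nonneg _
      apply div_nonpos_of_nonpos_of_nonneg _ hsq
      nlinarith
  have h := hanti (left_mem_Icc.2 hs) (right_mem_Icc.2 hs) hs
  simp only [zero_add, ccdf_zero hf, div_one] at h
  rw [div_le_iff₀ (hpos s (right_mem_Icc.2 hs))] at h
  calc ccdf f (s + t) ≤ ccdf f t * ccdf f s := h
    _ = ccdf f s * ccdf f t := mul_comm _ _

open scoped ENNReal

lemma setA_nonempty (hf : IsChainingDensity f) {p : ℝ} (hp : 0 < p) :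
    {s : ℝ | 0 ≤ s ∧ ccdf f s ≤ p}.Nonempty := by
  refine ⟨max 0 (-Real.log p), le_max_left _ _, ?_⟩
  calc ccdf f (max 0 (-Real.log p)) ≤ Real.exp (-(max 0 (-Real.log p))) :=
        ccdf_le_exp hf (le_max_left _ _)
    _ ≤ Real.exp (Real.log p) := Real.exp_le_exp.2 (by
        have := le_max_right 0 (-Real.log p); linarith)
    _ = p := Real.exp_log hp

lemma chainFnE_le (hf : IsChainingDensity f) {s p : ℝ} (hs : 0 ≤ s) (h : ccdf f s ≤ p) :
    chainFnE f p ≤ ENNReal.ofReal s := sInf_le ⟨s, hs, h, rfl⟩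

lemma chainFnE_anti {p q : ℝ} (hpq : p ≤ q) : chainFnE f q ≤ chainFnE f p :=
  sInf_le_sInf (fun t ht => by obtain ⟨s, h1, h2, h3⟩ := ht; exact ⟨s, h1, le_trans h2 hpq, h3⟩)

lemma chainFnE_of_one_le (hf : IsChainingDensity f) {p : ℝ} (hp : 1 ≤ p) :
    chainFnE f p = 0 := by
  refine le_antisymm ?_ zero_le
  have := chainFnE_le hf (p := p) le_rfl (le_of_eq_of_le (ccdf_zero hf) hp)
  simpa using this

lemma lt_ccdf_of_lt (hf : IsChainingDensity f) {s p : ℝ} (hs : 0 ≤ s)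
    (h : ENNReal.ofReal s < chainFnE f p) : p < ccdf f s := by
  by_contra h'
  push_neg at h'
  exact absurd (chainFnE_le hf hs h') (not_le.2 h)

lemma chainFn_mem (hf : IsChainingDensity f) {p : ℝ} (hp : 0 < p) :
    0 ≤ chainFn f p ∧ ccdf f (chainFn f p) ≤ p := by
  have hbdd : BddBelow {s : ℝ | 0 ≤ s ∧ ccdf f s ≤ p} := ⟨0, fun s hs => hs.1⟩
  have hclosed : IsClosed {s : ℝ | 0 ≤ s ∧ ccdf f s ≤ p} := by
    have he : {s : ℝ | 0 ≤ s ∧ ccdf f s ≤ p} = Set.Ici 0 ∩ ccdf f ⁻¹' (Set.Iic p) := by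
      ext u; simp [Set.mem_Ici, Set.mem_Iic, Set.mem_preimage]
    rw [he]
    exact (ccdf_continuousOn hf).preimage_isClosed_of_isClosed isClosed_Ici isClosed_Iic
  exact hclosed.csInf_mem (setA_nonempty hf hp) hbdd

lemma chainFnE_eq (hf : IsChainingDensity f) {p : ℝ} (hp : 0 < p) :
    chainFnE f p = ENNReal.ofReal (chainFn f p) := by
  obtain ⟨h1, h2⟩ := chainFn_mem hf hp
  refine le_antisymm (chainFnE_le hf h1 h2) (le_sInf ?_)
  rintro t ⟨s, hs1, hs2, rfl⟩
  exact ENNReal.ofReal_le_ofReal (csInf_le ⟨0, fun u hu => hu.1⟩ ⟨hs1, hs2⟩)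

lemma chainFnE_lt_top (hf : IsChainingDensity f) {p : ℝ} (hp : 0 < p) :
    chainFnE f p < ⊤ := by
  rw [chainFnE_eq hf hp]
  exact ENNReal.ofReal_lt_top

lemma chainFnE_subadd (hf : IsChainingDensity f) {p q : ℝ} (hp : 0 < p) (hq : 0 < q) :
    chainFnE f (p * q) ≤ chainFnE f p + chainFnE f q := by
  obtain ⟨ha0, haF⟩ := chainFn_mem hf hp
  obtain ⟨hb0, hbF⟩ := chainFn_mem hf hq
  have hF : ccdf f (chainFn f p + chainFn f q) ≤ p * q :=
    (ccdf_submul hf ha0 hb0).trans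
      (mul_le_mul haF hbF (ccdf_nonneg hf hb0) hp.le)
  calc chainFnE f (p * q) ≤ ENNReal.ofReal (chainFn f p + chainFn f q) :=
        chainFnE_le hf (add_nonneg ha0 hb0) hF
    _ = chainFnE f p + chainFnE f q := by
        rw [ENNReal.ofReal_add ha0 hb0, chainFnE_eq hf hp, chainFnE_eq hf hq]

lemma layer (a : ℝ≥0∞) :
    (volume.restrict (Set.Ioi (0:ℝ))) {t : ℝ | ENNReal.ofReal t < a} = a := by
  have hS : MeasurableSet {t : ℝ | ENNReal.ofReal t < a} :=
    measurableSet_lt (ENNReal.continuous_ofReal.measurable) measurable_const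
  rw [Measure.restrict_apply hS]
  rcases eq_or_ne a ⊤ with rfl | ha
  · have he : {t : ℝ | ENNReal.ofReal t < ⊤} ∩ Set.Ioi 0 = Set.Ioi 0 := by
      ext t; simp [ENNReal.ofReal_lt_top]
    rw [he, Real.volume_Ioi]
  · have he : {t : ℝ | ENNReal.ofReal t < a} ∩ Set.Ioi 0 = Set.Ioo 0 a.toReal := by
      ext t
      simp only [Set.mem_inter_iff, Set.mem_setOf_eq, Set.mem_Ioi, Set.mem_Ioo]
      constructor
      · rintro ⟨h1, h2⟩; exact ⟨h2, (ENNReal.ofReal_lt_iff_lt_toReal h2.le ha).1 h1⟩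
      · rintro ⟨h1, h2⟩; exact ⟨(ENNReal.ofReal_lt_iff_lt_toReal h1.le ha).2 h2, h1⟩
    rw [he, Real.volume_Ioo, sub_zero, ENNReal.ofReal_toReal ha]

lemma exp_lintegral {c D : ℝ} (hD : 0 < D) :
    (∫⁻ t in Set.Ioi c, ENNReal.ofReal (Real.exp (-((t - c)/D)))) = ENNReal.ofReal D := by
  have hint : IntegrableOn (fun t => Real.exp (-((t - c)/D))) (Set.Ioi c) := by
    have h1 : IntegrableOn (fun t : ℝ => Real.exp (-(D⁻¹ * t))) (Set.Ioi c) := by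
      simpa using exp_neg_integrableOn_Ioi c (by positivity : (0:ℝ) < D⁻¹)
    have h2 : IntegrableOn (fun t : ℝ => Real.exp (c/D) * Real.exp (-(D⁻¹ * t)))
        (Set.Ioi c) := h1.const_mul _
    refine IntegrableOn.congr_fun h2 ?_ measurableSet_Ioi
    intro t ht
    show Real.exp (c / D) * Real.exp (-(D⁻¹ * t)) = Real.exp (-((t - c) / D))
    rw [← Real.exp_add]
    congr 1
    field_simp
    ring
  have hderiv : ∀ x ∈ Set.Ici c,
      HasDerivAt (fun t => -D * Real.exp (-((t - c)/D))) (Real.exp (-((x - c)/D))) x := by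
    intro x _
    have h1 : HasDerivAt (fun t => -((t - c)/D)) (-(1/D)) x := by
      have := ((hasDerivAt_id x).sub_const c).div_const D
      exact this.neg
    have h2 := (h1.exp).const_mul (-D)
    refine h2.congr_deriv ?_
    field_simp
  have htend : Filter.Tendsto (fun t => -D * Real.exp (-((t - c)/D))) Filter.atTop (nhds 0) := by
    have h1 : Filter.Tendsto (fun t : ℝ => -((t - c)/D)) Filter.atTop Filter.atBot := by
      apply Filter.tendsto_neg_atBot_iff.2
      exact (Filter.tendsto_atTop_add_const_right _ (-c) Filter.tendsto_id).atTop_div_const hD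
    have h2 := Real.tendsto_exp_atBot.comp h1
    have h3 := h2.const_mul (-D)
    simpa using h3
  have hval : (∫ t in Set.Ioi c, Real.exp (-((t - c)/D))) = D := by
    rw [integral_Ioi_of_hasDerivAt_of_tendsto' hderiv hint htend]
    simp
  rw [← ofReal_integral_eq_lintegral_ofReal hint
    (Filter.Eventually.of_forall (fun t => (Real.exp_pos _).le)), hval]

end Aux5

/-- A probability measure on a finite set, given by its point masses. -/
def IsProbOn {X : Type*} [Fintype X] (μ : X → ℝ) : Prop :=
  (∀ x, 0 ≤ μ x) ∧ (∑ x, μ x) = 1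

/-- The mass `μ(B(x,r))` of the closed ball of radius `r` around `x`. -/
def ballMass {X : Type*} [MetricSpace X] [Fintype X] (μ : X → ℝ) (x : X) (r : ℝ) : ℝ :=
  ∑ y ∈ Finset.univ.filter (fun y => dist x y ≤ r), μ y

/-- `∫₀^∞ h(μ(B(x,r))) dr`, valued in `[0,∞]`. -/
def Hint {X : Type*} [MetricSpace X] [Fintype X] (f : ℝ → ℝ) (μ : X → ℝ) (x : X) : ℝ≥0∞ :=
  ∫⁻ r in Set.Ioi (0:ℝ), chainFnE f (ballMass μ x r)

/-- The diameter of the finite metric space `X`. -/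
def fdiam (X : Type*) [MetricSpace X] : ℝ := Metric.diam (Set.univ : Set X)

/-- The conditional probability measure `ν_S` of `ν` on a subset `S`. -/
def condMeasure {X : Type*} [Fintype X] (ν : X → ℝ) (S : Finset X) : X → ℝ :=
  fun x => letI := Classical.decEq X; if x ∈ S then ν x / (∑ y ∈ S, ν y) else 0

namespace Aux5
open Set

variable {X : Type*} [MetricSpace X] [Fintype X]

lemma ballMass_nonneg {μ : X → ℝ} (hμ : ∀ y, 0 ≤ μ y) (x : X) (r : ℝ) :
    0 ≤ ballMass μ x r :=
  Finset.sum_nonneg (fun y _ => hμ y)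

lemma le_ballMass {μ : X → ℝ} (hμ : ∀ y, 0 ≤ μ y) (x : X) {r : ℝ} (hr : 0 ≤ r) :
    μ x ≤ ballMass μ x r := by
  classical
  refine Finset.single_le_sum (fun y _ => hμ y) ?_
  simp only [Finset.mem_filter, Finset.mem_univ, true_and, dist_self]
  exact hr

lemma ballMass_eq_one {μ : X → ℝ} (hμ1 : (∑ y, μ y) = 1) (x : X) {r : ℝ}
    (hr : fdiam X ≤ r) : ballMass μ x r = 1 := by
  classical
  rw [ballMass, Finset.filter_true_of_mem, hμ1]
  intro y _
  exact le_trans (Metric.dist_le_diam_of_mem Set.finite_univ.isBounded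
    (Set.mem_univ x) (Set.mem_univ y)) hr

end Aux5

open Aux5

set_option maxHeartbeats 2000000 in
/-- for every probability measure `ν` on a finite metric space `X`,
there is a nonempty `S ⊆ {x : ν(x) > 0}` with
`Σ_x ν(x)·∫₀^∞ h(ν(B(x,r))) dr ≤ min_{x∈S} ∫₀^∞ h(ν_S(B(x,r))) dr + diam(X)`. -/
theorem stmt5 {X : Type*} [MetricSpace X] [Fintype X]
    (f : ℝ → ℝ) (hf : IsChainingDensity f) (ν : X → ℝ) (hν : IsProbOn ν) :
    ∃ S : Finset X, S.Nonempty ∧ (∀ x ∈ S, 0 < ν x) ∧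
      (∑ x, ENNReal.ofReal (ν x) * Hint f ν x) ≤
        (⨅ x ∈ S, Hint f (condMeasure ν S) x) + ENNReal.ofReal (fdiam X) := by
  classical
  obtain ⟨hν0, hν1⟩ := hν
  have hex : ∃ x₀ : X, 0 < ν x₀ := by
    by_contra hc
    push_neg at hc
    have hz : ∀ x, ν x = 0 := fun x => le_antisymm (hc x) (hν0 x)
    rw [Finset.sum_congr rfl (fun x _ => hz x)] at hν1
    simp at hν1
  set D := fdiam X with hDdef
  have hD0 : (0:ℝ) ≤ D := Metric.diam_nonneg
  set w : X → ℝ≥0∞ := fun x => Hint f ν x with hw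
  set M : ℝ≥0∞ := ∑ x, ENNReal.ofReal (ν x) * w x with hM
  show ∃ S : Finset X, S.Nonempty ∧ (∀ x ∈ S, 0 < ν x) ∧
    M ≤ (⨅ x ∈ S, Hint f (condMeasure ν S) x) + ENNReal.ofReal D
  by_cases hMD : M ≤ ENNReal.ofReal D
  · obtain ⟨x₀, hx₀⟩ := hex
    refine ⟨{x₀}, Finset.singleton_nonempty _, ?_, ?_⟩
    · intro x hx
      rw [Finset.mem_singleton] at hx
      subst hx
      exact hx₀
    · exact le_trans hMD (self_le_add_left _ _)
  push_neg at hMD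
  -- auxiliary: integrand vanishes beyond the diameter
  have hzero : ∀ (μ : X → ℝ), (∑ y, μ y) = 1 → ∀ (x : X) (r : ℝ), D ≤ r →
      chainFnE f (ballMass μ x r) = 0 := by
    intro μ hμ1 x r hr
    rw [ballMass_eq_one hμ1 x hr]
    exact chainFnE_of_one_le hf le_rfl
  -- finiteness of each Hint on the support, and of M
  have hwfin : ∀ x : X, 0 < ν x → w x < ⊤ := by
    intro x hx
    have hb : ∀ r ∈ Set.Ioi (0:ℝ), chainFnE f (ballMass ν x r) ≤
        (Set.Ioc 0 D).indicator (fun _ => chainFnE f (ν x)) r := by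
      intro r hr
      rw [Set.mem_Ioi] at hr
      by_cases hrD : r ≤ D
      · rw [Set.indicator_of_mem (show r ∈ Set.Ioc (0:ℝ) D from ⟨hr, hrD⟩)]
        exact chainFnE_anti (le_ballMass hν0 x hr.le)
      · push_neg at hrD
        rw [hzero ν hν1 x r hrD.le]
        exact zero_le
    have hle : w x ≤ chainFnE f (ν x) * ENNReal.ofReal D := by
      calc w x ≤ ∫⁻ r in Set.Ioi (0:ℝ),
            (Set.Ioc 0 D).indicator (fun _ => chainFnE f (ν x)) r := by
            refine lintegral_mono_ae ?_
            filter_upwards [ae_restrict_mem measurableSet_Ioi] with r hr using hb r hr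
        _ = chainFnE f (ν x) * (volume.restrict (Set.Ioi (0:ℝ))) (Set.Ioc 0 D) :=
            lintegral_indicator_const measurableSet_Ioc _
        _ = chainFnE f (ν x) * ENNReal.ofReal D := by
            rw [Measure.restrict_apply measurableSet_Ioc,
              Set.inter_eq_left.2 Set.Ioc_subset_Ioi_self, Real.volume_Ioc, sub_zero]
    exact lt_of_le_of_lt hle (ENNReal.mul_lt_top (chainFnE_lt_top hf hx) ENNReal.ofReal_lt_top)
  have hMfin : M ≠ ⊤ := by
    rw [hM]
    refine (ENNReal.sum_lt_top.2 ?_).ne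
    intro x _
    by_cases hx : 0 < ν x
    · exact ENNReal.mul_lt_top ENNReal.ofReal_lt_top (hwfin x hx)
    · rw [ENNReal.ofReal_eq_zero.2 (le_of_not_gt hx), zero_mul]
      exact ENNReal.zero_lt_top
  set m := M.toReal with hm
  have hMm : M = ENNReal.ofReal m := (ENNReal.ofReal_toReal hMfin).symm
  have hDm : D < m := by
    rw [hMm] at hMD
    exact (ENNReal.ofReal_lt_ofReal_iff_of_nonneg hD0).1 hMD
  have hDpos : (0:ℝ) < D := by
    rcases eq_or_lt_of_le hD0 with hD0' | hD0'
    · exfalso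
      have hwz : ∀ x : X, w x = 0 := by
        intro x
        rw [hw]
        show Hint f ν x = 0
        rw [Hint]
        rw [setLIntegral_congr_fun measurableSet_Ioi (fun r hr => hzero ν hν1 x r (by rw [← hD0'] at *; exact le_of_lt hr))]
        simp
      have : M = 0 := by
        rw [hM, Finset.sum_congr rfl (fun x _ => by rw [hwz x, mul_zero])]
        simp
      rw [this] at hMD
      simp at hMD
    · exact hD0'
  have hmD0 : (0:ℝ) < m - D := by linarith
  -- the level sets
  set S : ℝ → Finset X := fun t =>
    Finset.univ.filter (fun x => 0 < ν x ∧ ENNReal.ofReal t < w x) with hS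
  set νsum : ℝ → ℝ := fun t => ∑ x ∈ S t, ν x with hνsum
  set G : ℝ → ℝ≥0∞ := fun t =>
    ∑ x, {u : ℝ | ENNReal.ofReal u < w x}.indicator (fun _ => ENNReal.ofReal (ν x)) t with hG
  have hGS : ∀ t : ℝ, G t = ENNReal.ofReal (νsum t) := by
    intro t
    have h1 : ENNReal.ofReal (νsum t) = ∑ x ∈ S t, ENNReal.ofReal (ν x) :=
      ENNReal.ofReal_sum_of_nonneg (fun x hx => ((Finset.mem_filter.1 hx).2.1).le)
    rw [hG, h1, hS, Finset.sum_filter]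
    refine Finset.sum_congr rfl ?_
    intro x _
    rw [Set.indicator_apply]
    simp only [Set.mem_setOf_eq]
    by_cases h1 : 0 < ν x
    · by_cases h2 : ENNReal.ofReal t < w x
      · rw [if_pos h2, if_pos ⟨h1, h2⟩]
      · rw [if_neg h2, if_neg (fun hc => h2 hc.2)]
    · have hzz : ENNReal.ofReal (ν x) = 0 := ENNReal.ofReal_eq_zero.2 (le_of_not_gt h1)
      rw [hzz]
      simp
  have hSmeas : ∀ x : X, MeasurableSet {u : ℝ | ENNReal.ofReal u < w x} := fun x =>
    measurableSet_lt (ENNReal.continuous_ofReal.measurable) measurable_const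
  have hMG : M = ∫⁻ t in Set.Ioi (0:ℝ), G t := by
    rw [hM]
    have h1 : ∀ x : X, ENNReal.ofReal (ν x) * w x = ∫⁻ t in Set.Ioi (0:ℝ),
        {u : ℝ | ENNReal.ofReal u < w x}.indicator (fun _ => ENNReal.ofReal (ν x)) t := by
      intro x
      rw [lintegral_indicator_const (hSmeas x), layer]
    rw [Finset.sum_congr rfl (fun x _ => h1 x)]
    rw [← lintegral_finset_sum _ (fun x _ => measurable_const.indicator (hSmeas x))]
  have hSne : ∀ t : ℝ, ENNReal.ofReal t < M → (S t).Nonempty := by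
    have hmax : ∃ x₀ : X, 0 < ν x₀ ∧ M ≤ w x₀ := by
      obtain ⟨x₁, hx₁⟩ := hex
      obtain ⟨x₀, hx₀mem, hx₀max⟩ := Finset.exists_max_image
        (Finset.univ.filter (fun x => 0 < ν x)) w
        ⟨x₁, Finset.mem_filter.2 ⟨Finset.mem_univ _, hx₁⟩⟩
      have hx₀pos : 0 < ν x₀ := (Finset.mem_filter.1 hx₀mem).2
      refine ⟨x₀, hx₀pos, ?_⟩
      calc M = ∑ x, ENNReal.ofReal (ν x) * w x := hM
        _ ≤ ∑ x, ENNReal.ofReal (ν x) * w x₀ := by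
            refine Finset.sum_le_sum ?_
            intro x _
            by_cases hx : 0 < ν x
            · exact mul_le_mul_right (hx₀max x (Finset.mem_filter.2 ⟨Finset.mem_univ _, hx⟩)) _
            · rw [ENNReal.ofReal_eq_zero.2 (le_of_not_gt hx), zero_mul, zero_mul]
        _ = (∑ x, ENNReal.ofReal (ν x)) * w x₀ := by rw [Finset.sum_mul]
        _ = w x₀ := by
            rw [← ENNReal.ofReal_sum_of_nonneg (fun x _ => hν0 x), hν1]
            simp
    obtain ⟨x₀, hx₀pos, hx₀⟩ := hmax
    intro t ht
    exact ⟨x₀, Finset.mem_filter.2 ⟨Finset.mem_univ _, hx₀pos, lt_of_lt_of_le ht hx₀⟩⟩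
  -- key existence of a good level t
  have hkey : ∃ t : ℝ, m - D ≤ t ∧ (S t).Nonempty ∧
      chainFnE f (νsum t) ≤ ENNReal.ofReal ((t - (m - D))/D) := by
    by_contra hcon
    push_neg at hcon
    set g : ℝ → ℝ≥0∞ := fun t =>
      if t ≤ m - D then 1 else ENNReal.ofReal (Real.exp (-((t - (m - D))/D))) with hg
    have hg_meas : Measurable g := by
      refine Measurable.ite (measurableSet_le measurable_id measurable_const)
        measurable_const ?_
      exact (ENNReal.continuous_ofReal.comp (by continuity)).measurable
    have hGle1 : ∀ t : ℝ, G t ≤ 1 := by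
      intro t
      rw [hGS]
      refine ENNReal.ofReal_le_one.2 ?_
      calc νsum t ≤ ∑ x, ν x :=
            Finset.sum_le_sum_of_subset_of_nonneg (Finset.subset_univ _)
              (fun x _ _ => hν0 x)
        _ = 1 := hν1
    have hbound : ∀ t ∈ Set.Ioi (0:ℝ), G t ≤ g t := by
      intro t ht
      rw [show g t = (if t ≤ m - D then 1
        else ENNReal.ofReal (Real.exp (-((t - (m - D))/D)))) from rfl]
      by_cases h1 : t ≤ m - D
      · rw [if_pos h1]
        exact hGle1 t
      · rw [if_neg h1]
        push_neg at h1
        by_cases hne : (S t).Nonempty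
        · have hlt := hcon t (le_of_lt h1) hne
          have he0 : (0:ℝ) ≤ (t - (m - D))/D := div_nonneg (by linarith) hD0
          have h2 := lt_ccdf_of_lt hf he0 hlt
          rw [hGS]
          calc ENNReal.ofReal (νsum t) ≤ ENNReal.ofReal (ccdf f ((t - (m - D))/D)) :=
                ENNReal.ofReal_le_ofReal h2.le
            _ ≤ ENNReal.ofReal (Real.exp (-((t - (m - D))/D))) :=
                ENNReal.ofReal_le_ofReal (ccdf_le_exp hf he0)
        · have hz2 : νsum t = 0 := by
            show (∑ x ∈ S t, ν x) = 0
            rw [Finset.not_nonempty_iff_eq_empty.1 hne, Finset.sum_empty]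
          rw [hGS, hz2]
          simp
    have hstrict : ∀ t, t ∈ Set.Ioo (m - D) m → G t < g t := by
      intro t ht
      have ht0 : (0:ℝ) < t := lt_of_le_of_lt hmD0.le ht.1
      have hne : (S t).Nonempty := by
        refine hSne t ?_
        rw [hMm]
        exact (ENNReal.ofReal_lt_ofReal_iff (by linarith)).2 ht.2
      have he0 : (0:ℝ) ≤ (t - (m - D))/D := div_nonneg (by linarith [ht.1]) hD0
      have h2 := lt_ccdf_of_lt hf he0 (hcon t ht.1.le hne)
      rw [show g t = (if t ≤ m - D then 1
        else ENNReal.ofReal (Real.exp (-((t - (m - D))/D)))) from rfl,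
        if_neg (by linarith [ht.1] : ¬ t ≤ m - D), hGS]
      refine (ENNReal.ofReal_lt_ofReal_iff (Real.exp_pos _)).2 ?_
      exact lt_of_lt_of_le h2 (ccdf_le_exp hf he0)
    have hfin : (∫⁻ t in Set.Ioi (0:ℝ), G t) ≠ ⊤ := by
      rw [← hMG]; exact hMfin
    have hlt : (∫⁻ t in Set.Ioi (0:ℝ), G t) < ∫⁻ t in Set.Ioi (0:ℝ), g t := by
      refine lintegral_strict_mono_of_ae_le_of_ae_lt_on hg_meas.aemeasurable hfin ?_
        (s := Set.Ioo (m - D) m) ?_ ?_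
      · filter_upwards [ae_restrict_mem measurableSet_Ioi] with t ht using hbound t ht
      · have hsub : Set.Ioo (m - D) m ⊆ Set.Ioi 0 := fun u hu => lt_of_le_of_lt hmD0.le hu.1
        rw [Measure.restrict_apply measurableSet_Ioo, Set.inter_eq_left.2 hsub, Real.volume_Ioo]
        simp only [ne_eq, ENNReal.ofReal_eq_zero, not_le]
        linarith
      · exact Filter.Eventually.of_forall hstrict
    have hgval : (∫⁻ t in Set.Ioi (0:ℝ), g t) = ENNReal.ofReal m := by
      rw [show Set.Ioi (0:ℝ) = Set.Ioc 0 (m - D) ∪ Set.Ioi (m - D) from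
        (Set.Ioc_union_Ioi_eq_Ioi hmD0.le).symm]
      rw [lintegral_union measurableSet_Ioi (Set.Ioc_disjoint_Ioi le_rfl)]
      have h1 : (∫⁻ t in Set.Ioc (0:ℝ) (m - D), g t) = ENNReal.ofReal (m - D) := by
        have he : ∀ t ∈ Set.Ioc (0:ℝ) (m - D), g t = 1 := fun t ht => if_pos ht.2
        rw [setLIntegral_congr_fun measurableSet_Ioc he,
          setLIntegral_one, Real.volume_Ioc, sub_zero]
      have h2 : (∫⁻ t in Set.Ioi (m - D), g t) = ENNReal.ofReal D := by
        have he : ∀ t ∈ Set.Ioi (m - D), g t =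
            ENNReal.ofReal (Real.exp (-((t - (m - D))/D))) := fun t ht => if_neg (not_le.2 ht)
        rw [setLIntegral_congr_fun measurableSet_Ioi he]
        exact exp_lintegral hDpos
      rw [h1, h2, ← ENNReal.ofReal_add (by linarith) hD0]
      congr 1
      ring
    rw [← hMG, hgval, ← hMm] at hlt
    exact lt_irrefl _ hlt
  obtain ⟨t, htmD, hTne, hTbound⟩ := hkey
  refine ⟨S t, hTne, fun x hx => (Finset.mem_filter.1 hx).2.1, ?_⟩
  set q := νsum t with hq
  have hq0 : 0 < q := Finset.sum_pos (fun x hx => (Finset.mem_filter.1 hx).2.1) hTne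
  set μS := condMeasure ν (S t) with hμS
  have hμS_apply : ∀ y, μS y = if y ∈ S t then ν y / q else 0 := by
    intro y
    rw [hμS]
    unfold condMeasure
    split_ifs with h
    · rfl
    · rfl
  have hμS_nonneg : ∀ y, 0 ≤ μS y := by
    intro y
    rw [hμS_apply]
    split_ifs with h
    · exact div_nonneg (hν0 y) hq0.le
    · exact le_rfl
  have hμS_sum : (∑ y, μS y) = 1 := by
    rw [Finset.sum_congr rfl (fun y _ => hμS_apply y), Finset.sum_ite_mem,
      Finset.univ_inter, ← Finset.sum_div]
    exact div_self hq0.ne'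
  -- per-point bound
  have hpoint : ∀ x₀ ∈ S t, M ≤ Hint f μS x₀ + ENNReal.ofReal D := by
    intro x₀ hx₀
    obtain ⟨hx₀pos, hx₀w⟩ := (Finset.mem_filter.1 hx₀).2
    have hpt : ∀ r ∈ Set.Ioi (0:ℝ), chainFnE f (ballMass ν x₀ r) ≤
        chainFnE f (ballMass μS x₀ r) + (Set.Ioc 0 D).indicator (fun _ => chainFnE f q) r := by
      intro r hr
      rw [Set.mem_Ioi] at hr
      by_cases hrD : r ≤ D
      · rw [Set.indicator_of_mem (show r ∈ Set.Ioc (0:ℝ) D from ⟨hr, hrD⟩)]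
        have hbm : ballMass μS x₀ r * q ≤ ballMass ν x₀ r := by
          rw [ballMass, ballMass, Finset.sum_mul]
          refine Finset.sum_le_sum ?_
          intro y _
          rw [hμS_apply]
          split_ifs with h
          · rw [div_mul_cancel₀ _ hq0.ne']
          · rw [zero_mul]; exact hν0 y
        have hbmpos : 0 < ballMass μS x₀ r := by
          refine lt_of_lt_of_le ?_ (le_ballMass hμS_nonneg x₀ hr.le)
          rw [hμS_apply, if_pos hx₀]
          exact div_pos hx₀pos hq0
        calc chainFnE f (ballMass ν x₀ r) ≤ chainFnE f (ballMass μS x₀ r * q) :=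
              chainFnE_anti hbm
          _ ≤ chainFnE f (ballMass μS x₀ r) + chainFnE f q := chainFnE_subadd hf hbmpos hq0
      · push_neg at hrD
        rw [hzero ν hν1 x₀ r hrD.le]
        exact zero_le
    have hsplit : w x₀ ≤ Hint f μS x₀ + chainFnE f q * ENNReal.ofReal D := by
      calc w x₀ ≤ ∫⁻ r in Set.Ioi (0:ℝ), (chainFnE f (ballMass μS x₀ r) +
            (Set.Ioc 0 D).indicator (fun _ => chainFnE f q) r) := by
            refine lintegral_mono_ae ?_
            filter_upwards [ae_restrict_mem measurableSet_Ioi] with r hr using hpt r hr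
        _ = Hint f μS x₀ + ∫⁻ r in Set.Ioi (0:ℝ),
            (Set.Ioc 0 D).indicator (fun _ => chainFnE f q) r :=
            lintegral_add_right' _ ((measurable_const.indicator measurableSet_Ioc).aemeasurable)
        _ = Hint f μS x₀ + chainFnE f q * ENNReal.ofReal D := by
            rw [lintegral_indicator_const measurableSet_Ioc,
              Measure.restrict_apply measurableSet_Ioc,
              Set.inter_eq_left.2 Set.Ioc_subset_Ioi_self, Real.volume_Ioc, sub_zero]
    set c := t - (m - D) with hc
    have hc0 : (0:ℝ) ≤ c := by linarith
    have hqD : chainFnE f q * ENNReal.ofReal D ≤ ENNReal.ofReal c := by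
      calc chainFnE f q * ENNReal.ofReal D ≤ ENNReal.ofReal (c/D) * ENNReal.ofReal D :=
            mul_le_mul_left hTbound _
        _ = ENNReal.ofReal (c/D * D) := (ENNReal.ofReal_mul (div_nonneg hc0 hD0)).symm
        _ = ENNReal.ofReal c := by rw [div_mul_cancel₀ _ hDpos.ne']
    have hfinal : ENNReal.ofReal (m - D) + ENNReal.ofReal c ≤
        Hint f μS x₀ + ENNReal.ofReal c := by
      calc ENNReal.ofReal (m - D) + ENNReal.ofReal c = ENNReal.ofReal t := by
            rw [← ENNReal.ofReal_add (by linarith) hc0]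
            congr 1
            rw [hc]; ring
        _ ≤ w x₀ := hx₀w.le
        _ ≤ Hint f μS x₀ + chainFnE f q * ENNReal.ofReal D := hsplit
        _ ≤ Hint f μS x₀ + ENNReal.ofReal c := add_le_add_right hqD _
    have h9 : ENNReal.ofReal (m - D) ≤ Hint f μS x₀ :=
      (ENNReal.add_le_add_iff_right ENNReal.ofReal_ne_top).1 hfinal
    calc M = ENNReal.ofReal m := hMm
      _ = ENNReal.ofReal (m - D) + ENNReal.ofReal D := by
          rw [← ENNReal.ofReal_add (by linarith) hD0]
          congr 1
          ring
      _ ≤ Hint f μS x₀ + ENNReal.ofReal D := add_le_add_left h9 _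
  -- conclude via the minimizer
  obtain ⟨x₁, hx₁mem, hx₁min⟩ := Finset.exists_min_image (S t) (fun x => Hint f μS x) hTne
  have hinf : (⨅ x ∈ S t, Hint f μS x) = Hint f μS x₁ := by
    refine le_antisymm (biInf_le _ hx₁mem) (le_iInf₂ ?_)
    intro x hx
    exact hx₁min x hx
  rw [hinf]
  exact hpoint x₁ hx₁mem
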